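/- Let T be a 'double star': two adjacent centers v_0 and v_1 of degrees d_1 and d_2 respectively (2 ≤ d_1, d_2), with all other vertices being leaves. Then F(T) = ((d_1² + d_2² + d_1·d_2 - d_1 - d_2)/(d_1·d_2)) · (d_1 + d_2 - 2)!. -/

import Mathlib

open SimpleGraph Finset Nat

/-- A set of edges forms a connected (sub)graph: the graph it spans,
induced on its support, is connected. -/
def EdgeSetConnected (V : Type*) (S : Set (Sym2 V)) : Prop :=
  ((SimpleGraph.fromEdgeSet S).induce (SimpleGraph.fromEdgeSet S).support).Connected

/-- A shelling of a graph `G`: an ordering of its edges such that every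
initial segment forms a connected subgraph. -/
def IsShelling {V : Type*} (G : SimpleGraph V)
    (σ : Fin (Nat.card G.edgeSet) ≃ G.edgeSet) : Prop :=
  ∀ k : Fin (Nat.card G.edgeSet),
    EdgeSetConnected V {e | ∃ i, i ≤ k ∧ (σ i : Sym2 V) = e}

/-- The number of shellings of `G`. -/
noncomputable def shellingCount {V : Type*} (G : SimpleGraph V) : ℕ :=
  Nat.card {σ : Fin (Nat.card G.edgeSet) ≃ G.edgeSet // IsShelling G σ}

/-- The number of shellings of `G` rooted at `v`, i.e. whose first edge is incident to `v`. -/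
noncomputable def rootedShellingCount {V : Type*} (G : SimpleGraph V) (v : V) : ℕ :=
  Nat.card {σ : Fin (Nat.card G.edgeSet) ≃ G.edgeSet //
    IsShelling G σ ∧ ∃ h : 0 < Nat.card G.edgeSet, v ∈ (σ ⟨0, h⟩ : Sym2 V)}

/-- The number of vertices of the subtree rooted at `u` when the tree `G` is
rooted at `v`: vertices `w` such that `u` lies on the (unique) path from `v` to `w`. -/
noncomputable def subtreeSize {V : Type*} (G : SimpleGraph V) (v u : V) : ℕ :=
  Nat.card {w : V | ∀ p : G.Path v w, u ∈ (p : G.Walk v w).support}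

/-- The double star with centers of degrees `a+1` and `b+1`: the center `inl 0`
is joined to `a` leaves and to the center `inr 0`, which is joined to `b` leaves. -/
def doubleStar (a b : ℕ) : SimpleGraph (Fin (a + 1) ⊕ Fin (b + 1)) :=
  SimpleGraph.fromEdgeSet
    ({e | ∃ i : Fin (a + 1), i ≠ 0 ∧ e = s(Sum.inl 0, Sum.inl i)} ∪
     {e | ∃ j : Fin (b + 1), j ≠ 0 ∧ e = s(Sum.inr 0, Sum.inr j)} ∪
     {s(Sum.inl 0, Sum.inr 0)})

/-- For the double star with center degrees `d₁, d₂ ≥ 2`,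
`F(T) = ((d₁² + d₂² + d₁d₂ - d₁ - d₂)/(d₁ d₂)) (d₁ + d₂ - 2)!`
(stated multiplicatively). -/
lemma incl_excl {α : Type*} [Finite α] (P Q : α → Prop) :
    Nat.card {x // P x ∨ Q x} + Nat.card {x // P x ∧ Q x} =
      Nat.card {x // P x} + Nat.card {x // Q x} := by
  have h := Set.ncard_union_add_ncard_inter {x | P x} {x | Q x}
    (Set.toFinite _) (Set.toFinite _)
  have e1 : {x | P x} ∪ {x | Q x} = {x | P x ∨ Q x} := by ext x; simp [Set.mem_union]
  have e2 : {x | P x} ∩ {x | Q x} = {x | P x ∧ Q x} := by ext x; simp [Set.mem_inter_iff]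
  rw [e1, e2] at h
  simp only [← Nat.card_coe_set_eq] at h; exact h

lemma count_min {E : Type*} [Fintype E] [DecidableEq E] {n : ℕ}
    (S : Finset E) (c : E) (hc : c ∈ S) :
    Nat.card {τ : E ≃ Fin n // ∀ x ∈ S, τ c ≤ τ x} * S.card =
      Nat.card (E ≃ Fin n) := by
  classical
  have swap_mem : ∀ {x z : E}, x ∈ S → z ∈ S → Equiv.swap c x z ∈ S := by
    intro x z hx hz
    rcases eq_or_ne z c with rfl | hzc
    · simpa [Equiv.swap_apply_left] using hx
    · rcases eq_or_ne z x with rfl | hzx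
      · simpa [Equiv.swap_apply_right] using hc
      · simpa [Equiv.swap_apply_of_ne_of_ne hzc hzx] using hz
  have hne : ∀ τ' : E ≃ Fin n, (S.image τ').Nonempty := fun τ' => ⟨τ' c, mem_image_of_mem _ hc⟩
  have hxmem : ∀ τ' : E ≃ Fin n, τ'.symm ((S.image τ').min' (hne τ')) ∈ S := by
    intro τ'
    obtain ⟨y, hy, hy2⟩ := Finset.mem_image.mp (Finset.min'_mem (S.image τ') (hne τ'))
    simpa [← hy2] using hy
  let Φ : {τ : E ≃ Fin n // ∀ x ∈ S, τ c ≤ τ x} × {x // x ∈ S} ≃ (E ≃ Fin n) :=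
  { toFun := fun p => (Equiv.swap c p.2.val).trans p.1.val
    invFun := fun τ' =>
      (⟨(Equiv.swap c (τ'.symm ((S.image τ').min' (hne τ')))).trans τ', by
          intro z hz
          set x := τ'.symm ((S.image τ').min' (hne τ')) with hxdef
          have h1 : ((Equiv.swap c x).trans τ') c = (S.image τ').min' (hne τ') := by
            simp [Equiv.swap_apply_left, hxdef]
          rw [h1]
          exact Finset.min'_le _ _ (mem_image_of_mem _ (swap_mem (hxmem τ') hz))⟩,
       ⟨τ'.symm ((S.image τ').min' (hne τ')), hxmem τ'⟩)
    left_inv := fun p => by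
      obtain ⟨⟨τ, hτ⟩, ⟨x, hx⟩⟩ := p
      have hmin : ((S.image ((Equiv.swap c x).trans τ)).min'
          (hne ((Equiv.swap c x).trans τ))) = ((Equiv.swap c x).trans τ) x := by
        apply le_antisymm
        · exact Finset.min'_le _ _ (mem_image_of_mem _ hx)
        · apply Finset.le_min'
          intro y hy
          obtain ⟨z, hz, rfl⟩ := Finset.mem_image.mp hy
          have : ((Equiv.swap c x).trans τ) x = τ c := by simp [Equiv.swap_apply_right]
          rw [this]
          exact hτ _ (swap_mem hx hz)
      have hx' : ((Equiv.swap c x).trans τ).symm ((S.image ((Equiv.swap c x).trans τ)).min'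
          (hne ((Equiv.swap c x).trans τ))) = x := by
        rw [hmin]; exact Equiv.symm_apply_apply _ _
      refine Prod.ext (Subtype.ext ?_) (Subtype.ext ?_)
      · show (Equiv.swap c _).trans ((Equiv.swap c x).trans τ) = τ
        rw [hx']
        ext e
        simp [Equiv.swap_apply_self]
      · exact hx'
    right_inv := fun τ' => by
      show (Equiv.swap c _).trans ((Equiv.swap c _).trans τ') = τ'
      ext e
      simp [Equiv.swap_apply_self] }
  have h := Nat.card_congr Φ
  rw [Nat.card_prod, Nat.card_eq_fintype_card (α := {x // x ∈ S}), Fintype.card_coe] at h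
  exact h

lemma card_equiv_fin {E : Type*} [Fintype E] [DecidableEq E] {n : ℕ}
    (hn : Fintype.card E = n) : Nat.card (E ≃ Fin n) = n ! := by
  rw [Nat.card_eq_fintype_card, Fintype.card_equiv (Fintype.equivFinOfCardEq hn), hn]


section DS
variable (a b : ℕ)

abbrev DV := Fin (a + 1) ⊕ Fin (b + 1)

def cE : Sym2 (DV a b) := s(Sum.inl 0, Sum.inr 0)
def uE (i : Fin a) : Sym2 (DV a b) := s(Sum.inl 0, Sum.inl i.succ)
def wE (j : Fin b) : Sym2 (DV a b) := s(Sum.inr 0, Sum.inr j.succ)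

lemma edgeSet_doubleStar :
    (doubleStar a b).edgeSet =
      {e | (∃ i, e = uE a b i) ∨ (∃ j, e = wE a b j) ∨ e = cE a b} := by
  rw [doubleStar, edgeSet_fromEdgeSet]
  ext e
  simp only [Set.mem_diff, Set.mem_union, Set.mem_setOf_eq, Set.mem_singleton_iff]
  constructor
  · rintro ⟨(⟨i, hi, rfl⟩ | ⟨j, hj, rfl⟩) | rfl, _⟩
    · obtain ⟨i', rfl⟩ := Fin.exists_succ_eq.mpr hi
      exact Or.inl ⟨i', rfl⟩
    · obtain ⟨j', rfl⟩ := Fin.exists_succ_eq.mpr hj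
      exact Or.inr (Or.inl ⟨j', rfl⟩)
    · exact Or.inr (Or.inr rfl)
  · rintro (⟨i, rfl⟩ | ⟨j, rfl⟩ | rfl)
    · exact ⟨Or.inl (Or.inl ⟨i.succ, i.succ_ne_zero, rfl⟩),
        fun h => Fin.succ_ne_zero i (Sum.inl_injective (Sym2.mk_isDiag_iff.mp h)).symm⟩
    · exact ⟨Or.inl (Or.inr ⟨j.succ, j.succ_ne_zero, rfl⟩),
        fun h => Fin.succ_ne_zero j (Sum.inr_injective (Sym2.mk_isDiag_iff.mp h)).symm⟩
    · exact ⟨Or.inr rfl, fun h => Sum.inl_ne_inr (Sym2.mk_isDiag_iff.mp h)⟩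

variable {a b}

-- injectivity / distinctness
lemma uE_inj {i i' : Fin a} (h : uE a b i = uE a b i') : i = i' := by
  simp only [uE, Sym2.eq, Sym2.rel_iff', Prod.mk.injEq, Prod.swap_prod_mk] at h
  rcases h with ⟨-, h⟩ | ⟨h1, h2⟩
  · exact Fin.succ_injective _ (Sum.inl.injEq .. ▸ (by injection h))
  · exact absurd (by injection h1 : (0 : Fin (a+1)) = Fin.succ i') (Fin.succ_ne_zero i').symm

lemma wE_inj {j j' : Fin b} (h : wE a b j = wE a b j') : j = j' := by
  simp only [wE, Sym2.eq, Sym2.rel_iff', Prod.mk.injEq, Prod.swap_prod_mk] at h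
  rcases h with ⟨-, h⟩ | ⟨h1, h2⟩
  · exact Fin.succ_injective _ (by injection h)
  · exact absurd (by injection h1 : (0 : Fin (b+1)) = Fin.succ j') (Fin.succ_ne_zero j').symm

lemma uE_ne_wE (i : Fin a) (j : Fin b) : uE a b i ≠ wE a b j := by
  intro h
  simp only [uE, wE, Sym2.eq, Sym2.rel_iff', Prod.mk.injEq, Prod.swap_prod_mk] at h
  rcases h with ⟨h, -⟩ | ⟨h, -⟩ <;> exact Sum.inl_ne_inr h

lemma uE_ne_cE (i : Fin a) : uE a b i ≠ cE a b := by
  intro h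
  simp only [uE, cE, Sym2.eq, Sym2.rel_iff', Prod.mk.injEq, Prod.swap_prod_mk] at h
  rcases h with ⟨-, h⟩ | ⟨h, -⟩ <;> exact Sum.inl_ne_inr h

lemma wE_ne_cE (j : Fin b) : wE a b j ≠ cE a b := by
  intro h
  simp only [wE, cE, Sym2.eq, Sym2.rel_iff', Prod.mk.injEq, Prod.swap_prod_mk] at h
  rcases h with ⟨h, -⟩ | ⟨-, h⟩ <;> exact Sum.inr_ne_inl h


lemma inl_ne_succ (i : Fin a) : (Sum.inl 0 : DV a b) ≠ Sum.inl i.succ :=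
  fun h => Fin.succ_ne_zero i (Sum.inl_injective h).symm

lemma inr_ne_succ (j : Fin b) : (Sum.inr 0 : DV a b) ≠ Sum.inr j.succ :=
  fun h => Fin.succ_ne_zero j (Sum.inr_injective h).symm

lemma adj_c {S : Set (Sym2 (DV a b))} (h : cE a b ∈ S) :
    (fromEdgeSet S).Adj (Sum.inl 0) (Sum.inr 0) :=
  (fromEdgeSet_adj _).mpr ⟨h, Sum.inl_ne_inr⟩

lemma adj_u {S : Set (Sym2 (DV a b))} {i : Fin a} (h : uE a b i ∈ S) :
    (fromEdgeSet S).Adj (Sum.inl 0) (Sum.inl i.succ) :=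
  (fromEdgeSet_adj _).mpr ⟨h, inl_ne_succ i⟩

lemma adj_w {S : Set (Sym2 (DV a b))} {j : Fin b} (h : wE a b j ∈ S) :
    (fromEdgeSet S).Adj (Sum.inr 0) (Sum.inr j.succ) :=
  (fromEdgeSet_adj _).mpr ⟨h, inr_ne_succ j⟩

end DS

lemma edgeSetConnected_of_hub {V' : Type*} (S : Set (Sym2 V')) (h₀ : V')
    (hh : h₀ ∈ (fromEdgeSet S).support)
    (hub : ∀ v ∈ (fromEdgeSet S).support,
      v = h₀ ∨ (fromEdgeSet S).Adj v h₀ ∨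
        ∃ w, (fromEdgeSet S).Adj v w ∧ (fromEdgeSet S).Adj w h₀) :
    EdgeSetConnected V' S := by
  rw [EdgeSetConnected]
  have iadj : ∀ (x y : V') (hx : x ∈ (fromEdgeSet S).support)
      (hy : y ∈ (fromEdgeSet S).support), (fromEdgeSet S).Adj x y →
      ((fromEdgeSet S).induce (fromEdgeSet S).support).Adj ⟨x, hx⟩ ⟨y, hy⟩ := by
    intro x y hx hy hxy
    exact SimpleGraph.comap_adj.mpr hxy
  have reach : ∀ x : (fromEdgeSet S).support,
      ((fromEdgeSet S).induce (fromEdgeSet S).support).Reachable x ⟨h₀, hh⟩ := by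
    rintro ⟨v, hv⟩
    rcases hub v hv with rfl | hadj | ⟨w, hvw, hwh⟩
    · exact Reachable.refl _
    · exact (iadj v h₀ hv hh hadj).reachable
    · have hw : w ∈ (fromEdgeSet S).support := (mem_support _).mpr ⟨h₀, hwh⟩
      exact ((iadj v w hv hw hvw).reachable).trans ((iadj w h₀ hw hh hwh).reachable)
  exact (connected_iff _).mpr ⟨fun x y => (reach x).trans (reach y).symm, ⟨⟨h₀, hh⟩⟩⟩

section DS2
variable {a b : ℕ}

lemma not_conn_bad {S : Set (Sym2 (DV a b))} (hS : S ⊆ (doubleStar a b).edgeSet)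
    (hc : cE a b ∉ S) {i : Fin a} {j : Fin b}
    (hu : uE a b i ∈ S) (hw : wE a b j ∈ S) :
    ¬ EdgeSetConnected (DV a b) S := by
  intro h
  have side : ∀ x y : DV a b, (fromEdgeSet S).Adj x y → x.isLeft = y.isLeft := by
    intro x y hxy
    have hmem : s(x, y) ∈ S := ((fromEdgeSet_adj _).mp hxy).1
    have hes := hS hmem
    rw [edgeSet_doubleStar] at hes
    rcases hes with ⟨i', hi'⟩ | ⟨j', hj'⟩ | hce
    · rw [uE, Sym2.eq_iff] at hi'
      rcases hi' with ⟨rfl, rfl⟩ | ⟨rfl, rfl⟩ <;> rfl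
    · rw [wE, Sym2.eq_iff] at hj'
      rcases hj' with ⟨rfl, rfl⟩ | ⟨rfl, rfl⟩ <;> rfl
    · exact absurd (hce ▸ hmem) hc
  have walkside : ∀ (x y : ↑(fromEdgeSet S).support)
      (p : ((fromEdgeSet S).induce (fromEdgeSet S).support).Walk x y),
      (x : DV a b).isLeft = (y : DV a b).isLeft := by
    intro x y p
    induction p with
    | nil => rfl
    | cons hadj p ih => exact (side _ _ hadj).trans ih
  have hul : (Sum.inl i.succ : DV a b) ∈ (fromEdgeSet S).support :=
    (mem_support _).mpr ⟨Sum.inl 0, (adj_u hu).symm⟩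
  have hwr : (Sum.inr 0 : DV a b) ∈ (fromEdgeSet S).support :=
    (mem_support _).mpr ⟨Sum.inr j.succ, adj_w hw⟩
  obtain ⟨p⟩ := h.preconnected ⟨Sum.inl i.succ, hul⟩ ⟨Sum.inr 0, hwr⟩
  simpa using walkside _ _ p

lemma conn_good {S : Set (Sym2 (DV a b))} (hS : S ⊆ (doubleStar a b).edgeSet)
    (hne : S.Nonempty)
    (hgood : (∃ i, uE a b i ∈ S) → (∃ j, wE a b j ∈ S) → cE a b ∈ S) :
    EdgeSetConnected (DV a b) S := by
  classical
  by_cases hcS : cE a b ∈ S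
  · apply edgeSetConnected_of_hub S (Sum.inl 0)
    · exact (mem_support _).mpr ⟨Sum.inr 0, adj_c hcS⟩
    · intro v hv
      obtain ⟨w, hvw⟩ := (mem_support _).mp hv
      have hmem : s(v, w) ∈ S := ((fromEdgeSet_adj _).mp hvw).1
      have hes := hS hmem
      rw [edgeSet_doubleStar] at hes
      rcases hes with ⟨i', hi'⟩ | ⟨j', hj'⟩ | hce
      · rw [uE, Sym2.eq_iff] at hi'
        rcases hi' with ⟨rfl, rfl⟩ | ⟨rfl, rfl⟩
        · exact Or.inl rfl
        · exact Or.inr (Or.inl hvw)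
      · rw [wE, Sym2.eq_iff] at hj'
        rcases hj' with ⟨rfl, rfl⟩ | ⟨rfl, rfl⟩
        · exact Or.inr (Or.inl (adj_c hcS).symm)
        · exact Or.inr (Or.inr ⟨Sum.inr 0, hvw, (adj_c hcS).symm⟩)
      · rw [cE, Sym2.eq_iff] at hce
        rcases hce with ⟨rfl, rfl⟩ | ⟨rfl, rfl⟩
        · exact Or.inl rfl
        · exact Or.inr (Or.inl (adj_c hcS).symm)
  · by_cases hU : ∃ i, uE a b i ∈ S
    · -- then no wE in S
      have hnw : ∀ j, wE a b j ∉ S := by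
        intro j hj
        exact hcS (hgood hU ⟨j, hj⟩)
      obtain ⟨i₀, hi₀⟩ := hU
      apply edgeSetConnected_of_hub S (Sum.inl 0)
      · exact (mem_support _).mpr ⟨Sum.inl i₀.succ, adj_u hi₀⟩
      · intro v hv
        obtain ⟨w, hvw⟩ := (mem_support _).mp hv
        have hmem : s(v, w) ∈ S := ((fromEdgeSet_adj _).mp hvw).1
        have hes := hS hmem
        rw [edgeSet_doubleStar] at hes
        rcases hes with ⟨i', hi'⟩ | ⟨j', hj'⟩ | hce
        · rw [uE, Sym2.eq_iff] at hi'
          rcases hi' with ⟨rfl, rfl⟩ | ⟨rfl, rfl⟩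
          · exact Or.inl rfl
          · exact Or.inr (Or.inl hvw)
        · exact absurd (hj' ▸ hmem) (hnw j')
        · exact absurd (hce ▸ hmem) hcS
    · -- no uE in S
      have hnu : ∀ i, uE a b i ∉ S := fun i hi => hU ⟨i, hi⟩
      obtain ⟨e, he⟩ := hne
      have hes0 := hS he
      rw [edgeSet_doubleStar] at hes0
      rcases hes0 with ⟨i', hi'⟩ | ⟨j₀, hj₀⟩ | hce
      · exact absurd (hi' ▸ he) (hnu i')
      · apply edgeSetConnected_of_hub S (Sum.inr 0)
        · exact (mem_support _).mpr ⟨Sum.inr j₀.succ, adj_w (hj₀ ▸ he)⟩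
        · intro v hv
          obtain ⟨w, hvw⟩ := (mem_support _).mp hv
          have hmem : s(v, w) ∈ S := ((fromEdgeSet_adj _).mp hvw).1
          have hes := hS hmem
          rw [edgeSet_doubleStar] at hes
          rcases hes with ⟨i', hi'⟩ | ⟨j', hj'⟩ | hce
          · exact absurd (hi' ▸ hmem) (hnu i')
          · rw [wE, Sym2.eq_iff] at hj'
            rcases hj' with ⟨rfl, rfl⟩ | ⟨rfl, rfl⟩
            · exact Or.inl rfl
            · exact Or.inr (Or.inl hvw)
          · exact absurd (hce ▸ hmem) hcS
      · exact absurd (hce ▸ he) hcS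

end DS2

section DS3
variable (a b : ℕ)


lemma uE_mem (i : Fin a) : uE a b i ∈ (doubleStar a b).edgeSet := by
  rw [edgeSet_doubleStar]; exact Or.inl ⟨i, rfl⟩
lemma wE_mem (j : Fin b) : wE a b j ∈ (doubleStar a b).edgeSet := by
  rw [edgeSet_doubleStar]; exact Or.inr (Or.inl ⟨j, rfl⟩)
lemma cE_mem : cE a b ∈ (doubleStar a b).edgeSet := by
  rw [edgeSet_doubleStar]; exact Or.inr (Or.inr rfl)

def uS (i : Fin a) : (doubleStar a b).edgeSet := ⟨uE a b i, uE_mem a b i⟩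
def wS (j : Fin b) : (doubleStar a b).edgeSet := ⟨wE a b j, wE_mem a b j⟩
def cS : (doubleStar a b).edgeSet := ⟨cE a b, cE_mem a b⟩

lemma edge_cases (x : (doubleStar a b).edgeSet) :
    (∃ i, x = uS a b i) ∨ (∃ j, x = wS a b j) ∨ x = cS a b := by
  obtain ⟨e, he⟩ := x
  have he' := he
  rw [edgeSet_doubleStar] at he'
  rcases he' with ⟨i, rfl⟩ | ⟨j, rfl⟩ | rfl
  · exact Or.inl ⟨i, rfl⟩
  · exact Or.inr (Or.inl ⟨j, rfl⟩)
  · exact Or.inr (Or.inr rfl)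

noncomputable def dsEquiv : (Fin a ⊕ Fin b ⊕ Unit) ≃ (doubleStar a b).edgeSet :=
  Equiv.ofBijective
    (fun x => match x with
      | Sum.inl i => uS a b i
      | Sum.inr (Sum.inl j) => wS a b j
      | Sum.inr (Sum.inr _) => cS a b)
    (by
      constructor
      · rintro (i | j | u) (i' | j' | u') h <;>
          simp only [Subtype.mk.injEq, uS, wS, cS] at h
        · exact congrArg Sum.inl (uE_inj h)
        · exact absurd h (uE_ne_wE i j')
        · exact absurd h (uE_ne_cE i)
        · exact absurd h.symm (uE_ne_wE i' j)
        · exact congrArg (Sum.inr ∘ Sum.inl) (wE_inj h)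
        · exact absurd h (wE_ne_cE j)
        · exact absurd h.symm (uE_ne_cE i')
        · exact absurd h.symm (wE_ne_cE j')
        · rfl
      · intro x
        rcases edge_cases a b x with ⟨i, rfl⟩ | ⟨j, rfl⟩ | rfl
        · exact ⟨Sum.inl i, rfl⟩
        · exact ⟨Sum.inr (Sum.inl j), rfl⟩
        · exact ⟨Sum.inr (Sum.inr ()), rfl⟩)

lemma m_eq : Nat.card (doubleStar a b).edgeSet = a + b + 1 := by
  rw [← Nat.card_congr (dsEquiv a b)]
  simp only [Nat.card_eq_fintype_card, Fintype.card_sum, Fintype.card_fin, Fintype.card_unit]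
  omega

variable {a b}

lemma prefix_mem (σ : Fin (Nat.card (doubleStar a b).edgeSet) ≃ (doubleStar a b).edgeSet)
    (k : Fin (Nat.card (doubleStar a b).edgeSet)) (x : (doubleStar a b).edgeSet) :
    ((x : Sym2 (DV a b)) ∈ {e | ∃ i, i ≤ k ∧ ((σ i : (doubleStar a b).edgeSet) : Sym2 (DV a b)) = e})
      ↔ σ.symm x ≤ k := by
  constructor
  · rintro ⟨i, hik, hi⟩
    have : σ i = x := Subtype.coe_injective hi
    rwa [← this, Equiv.symm_apply_apply]
  · intro h
    exact ⟨σ.symm x, h, congrArg Subtype.val (σ.apply_symm_apply x)⟩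

lemma shelling_iff (σ : Fin (Nat.card (doubleStar a b).edgeSet) ≃ (doubleStar a b).edgeSet) :
    IsShelling (doubleStar a b) σ ↔
      ((∀ i : Fin a, σ.symm (cS a b) ≤ σ.symm (uS a b i)) ∨
       (∀ j : Fin b, σ.symm (cS a b) ≤ σ.symm (wS a b j))) := by
  constructor
  · intro hs
    by_contra hcon
    push_neg at hcon
    obtain ⟨⟨i, hi⟩, ⟨j, hj⟩⟩ := hcon
    set k := max (σ.symm (uS a b i)) (σ.symm (wS a b j)) with hk
    refine not_conn_bad (S := {e | ∃ i', i' ≤ k ∧ ((σ i' : (doubleStar a b).edgeSet) : Sym2 (DV a b)) = e})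
      ?_ ?_ (i := i) (j := j) ?_ ?_ (hs k)
    · rintro e ⟨i', -, rfl⟩
      exact (σ i').2
    · intro hmem
      have := (prefix_mem σ k (cS a b)).mp hmem
      rw [hk, le_max_iff] at this
      rcases this with h | h
      · exact absurd h (not_le.mpr hi)
      · exact absurd h (not_le.mpr hj)
    · exact (prefix_mem σ k (uS a b i)).mpr (le_max_left _ _)
    · exact (prefix_mem σ k (wS a b j)).mpr (le_max_right _ _)
  · intro hA k
    apply conn_good
    · rintro e ⟨i', -, rfl⟩
      exact (σ i').2
    · exact ⟨(σ k : (doubleStar a b).edgeSet), ⟨k, le_refl k, rfl⟩⟩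
    · rintro ⟨i, hiu⟩ ⟨j, hjw⟩
      have hu := (prefix_mem σ k (uS a b i)).mp hiu
      have hw := (prefix_mem σ k (wS a b j)).mp hjw
      rcases hA with hA | hA
      · exact (prefix_mem σ k (cS a b)).mpr (le_trans (hA i) hu)
      · exact (prefix_mem σ k (cS a b)).mpr (le_trans (hA j) hw)

end DS3

lemma arith_helper (a b NA NB NC F K : ℕ)
    (hNA : NA * (a + 1) = (a + b + 1) * K)
    (hNB : NB * (b + 1) = (a + b + 1) * K)
    (hNC : NC * (a + b + 1) = (a + b + 1) * K)
    (hIE : F + NC = NA + NB) :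
    (a + 1) * (b + 1) * F = (a*a + b*b + a*b + 2*a + 2*b + 1) * K := by
  have hNCK : NC = K :=
    Nat.eq_of_mul_eq_mul_right (Nat.succ_pos _) (hNC.trans (mul_comm _ _))
  have key : (a+1)*(b+1)*F + (a+1)*(b+1)*K = (b+1)*((a+b+1)*K) + (a+1)*((a+b+1)*K) := by
    calc (a+1)*(b+1)*F + (a+1)*(b+1)*K = (a+1)*(b+1)*(F+NC) := by rw [hNCK]; ring
    _ = (a+1)*(b+1)*(NA+NB) := by rw [hIE]
    _ = (b+1)*(NA*(a+1)) + (a+1)*(NB*(b+1)) := by ring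
    _ = _ := by rw [hNA, hNB]
  have key2 : (a*a+b*b+a*b+2*a+2*b+1)*K + (a+1)*(b+1)*K
      = (b+1)*((a+b+1)*K) + (a+1)*((a+b+1)*K) := by ring
  exact Nat.add_right_cancel (key.trans key2.symm)

theorem shellingCount_doubleStar (d₁ d₂ : ℕ) (h₁ : 2 ≤ d₁) (h₂ : 2 ≤ d₂) :
    d₁ * d₂ * shellingCount (doubleStar (d₁ - 1) (d₂ - 1)) =
      (d₁ ^ 2 + d₂ ^ 2 + d₁ * d₂ - d₁ - d₂) * (d₁ + d₂ - 2)! := by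
  classical
  obtain ⟨a, rfl⟩ : ∃ a, d₁ = a + 1 := ⟨d₁ - 1, by omega⟩
  obtain ⟨b, rfl⟩ : ∃ b, d₂ = b + 1 := ⟨d₂ - 1, by omega⟩
  show (a+1) * (b+1) * shellingCount (doubleStar a b) =
    ((a+1) ^ 2 + (b+1) ^ 2 + (a+1) * (b+1) - (a+1) - (b+1)) * (a+1+(b+1)-2)!
  letI : Fintype ((doubleStar a b).edgeSet) := Fintype.ofFinite _
  have hcardE : Fintype.card ((doubleStar a b).edgeSet)
      = Nat.card ((doubleStar a b).edgeSet) := Nat.card_eq_fintype_card.symm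
  set m := Nat.card ((doubleStar a b).edgeSet) with hm
  have hmab : m = a + b + 1 := m_eq a b
  have hEq : Nat.card (((doubleStar a b).edgeSet : Type _) ≃ Fin m) = m ! :=
    card_equiv_fin hcardE
  have hfact : m ! = (a + b + 1) * (a + b)! := by rw [hmab, Nat.factorial_succ]
  have hsc : shellingCount (doubleStar a b) =
      Nat.card {τ : ((doubleStar a b).edgeSet : Type _) ≃ Fin m //
        (∀ i : Fin a, τ (cS a b) ≤ τ (uS a b i)) ∨
        (∀ j : Fin b, τ (cS a b) ≤ τ (wS a b j))} := by
    rw [shellingCount]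
    apply Nat.card_congr
    refine (Equiv.subtypeEquivRight fun σ => shelling_iff σ).trans ?_
    exact Equiv.subtypeEquiv
      (⟨fun σ => σ.symm, fun τ => τ.symm, fun σ => σ.symm_symm, fun τ => τ.symm_symm⟩ :
        (Fin m ≃ ((doubleStar a b).edgeSet : Type _)) ≃ (((doubleStar a b).edgeSet : Type _) ≃ Fin m))
      (fun σ => Iff.rfl)
  set SU : Finset ((doubleStar a b).edgeSet) :=
    insert (cS a b) (Finset.univ.image (uS a b)) with hSU
  set SW : Finset ((doubleStar a b).edgeSet) :=
    insert (cS a b) (Finset.univ.image (wS a b)) with hSW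
  have hcSU : cS a b ∈ SU := Finset.mem_insert_self _ _
  have hcSW : cS a b ∈ SW := Finset.mem_insert_self _ _
  have hSUcard : SU.card = a + 1 := by
    rw [hSU, Finset.card_insert_of_notMem, Finset.card_image_of_injective _
      (fun i i' h => uE_inj (Subtype.ext_iff.mp h)), Finset.card_univ, Fintype.card_fin]
    intro hmem
    obtain ⟨i, -, hi⟩ := Finset.mem_image.mp hmem
    exact uE_ne_cE i (Subtype.ext_iff.mp hi)
  have hSWcard : SW.card = b + 1 := by
    rw [hSW, Finset.card_insert_of_notMem, Finset.card_image_of_injective _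
      (fun j j' h => wE_inj (Subtype.ext_iff.mp h)), Finset.card_univ, Fintype.card_fin]
    intro hmem
    obtain ⟨j, -, hj⟩ := Finset.mem_image.mp hmem
    exact wE_ne_cE j (Subtype.ext_iff.mp hj)
  have hNAeq : Nat.card {τ : ((doubleStar a b).edgeSet : Type _) ≃ Fin m //
      ∀ i : Fin a, τ (cS a b) ≤ τ (uS a b i)} * (a + 1) = (a + b + 1) * (a + b)! := by
    have e1 : Nat.card {τ : ((doubleStar a b).edgeSet : Type _) ≃ Fin m //
        ∀ i : Fin a, τ (cS a b) ≤ τ (uS a b i)} =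
        Nat.card {τ : ((doubleStar a b).edgeSet : Type _) ≃ Fin m //
        ∀ x ∈ SU, τ (cS a b) ≤ τ x} := by
      apply Nat.card_congr
      apply Equiv.subtypeEquivRight
      intro τ
      constructor
      · intro h x hx
        rcases Finset.mem_insert.mp hx with rfl | hx
        · exact le_refl _
        · obtain ⟨i, -, rfl⟩ := Finset.mem_image.mp hx
          exact h i
      · intro h i
        exact h _ (Finset.mem_insert_of_mem (Finset.mem_image_of_mem _ (Finset.mem_univ i)))
    have e2 := count_min (n := m) SU (cS a b) hcSU
    rw [hSUcard, hEq, hfact] at e2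
    rw [e1]
    exact e2
  have hNBeq : Nat.card {τ : ((doubleStar a b).edgeSet : Type _) ≃ Fin m //
      ∀ j : Fin b, τ (cS a b) ≤ τ (wS a b j)} * (b + 1) = (a + b + 1) * (a + b)! := by
    have e1 : Nat.card {τ : ((doubleStar a b).edgeSet : Type _) ≃ Fin m //
        ∀ j : Fin b, τ (cS a b) ≤ τ (wS a b j)} =
        Nat.card {τ : ((doubleStar a b).edgeSet : Type _) ≃ Fin m //
        ∀ x ∈ SW, τ (cS a b) ≤ τ x} := by
      apply Nat.card_congr
      apply Equiv.subtypeEquivRight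
      intro τ
      constructor
      · intro h x hx
        rcases Finset.mem_insert.mp hx with rfl | hx
        · exact le_refl _
        · obtain ⟨j, -, rfl⟩ := Finset.mem_image.mp hx
          exact h j
      · intro h j
        exact h _ (Finset.mem_insert_of_mem (Finset.mem_image_of_mem _ (Finset.mem_univ j)))
    have e2 := count_min (n := m) SW (cS a b) hcSW
    rw [hSWcard, hEq, hfact] at e2
    rw [e1]
    exact e2
  have hNCeq : Nat.card {τ : ((doubleStar a b).edgeSet : Type _) ≃ Fin m //
      (∀ i : Fin a, τ (cS a b) ≤ τ (uS a b i)) ∧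
      (∀ j : Fin b, τ (cS a b) ≤ τ (wS a b j))} * (a + b + 1) = (a + b + 1) * (a + b)! := by
    have e1 : Nat.card {τ : ((doubleStar a b).edgeSet : Type _) ≃ Fin m //
        (∀ i : Fin a, τ (cS a b) ≤ τ (uS a b i)) ∧
        (∀ j : Fin b, τ (cS a b) ≤ τ (wS a b j))} =
        Nat.card {τ : ((doubleStar a b).edgeSet : Type _) ≃ Fin m //
        ∀ x ∈ (Finset.univ : Finset ((doubleStar a b).edgeSet)), τ (cS a b) ≤ τ x} := by
      apply Nat.card_congr
      apply Equiv.subtypeEquivRight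
      intro τ
      constructor
      · rintro ⟨hAτ, hBτ⟩ x -
        rcases edge_cases a b x with ⟨i, rfl⟩ | ⟨j, rfl⟩ | rfl
        · exact hAτ i
        · exact hBτ j
        · exact le_refl _
      · intro h
        exact ⟨fun i => h _ (Finset.mem_univ _), fun j => h _ (Finset.mem_univ _)⟩
    have e2 := count_min (n := m) (Finset.univ : Finset ((doubleStar a b).edgeSet)) (cS a b)
      (Finset.mem_univ _)
    rw [Finset.card_univ, hcardE] at e2
    have e3 : m * (a + b)! = m ! := by rw [hmab, Nat.factorial_succ]
    rw [e1, ← hmab]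
    exact e2.trans (hEq.trans e3.symm)
  have hIE := incl_excl
    (fun τ : ((doubleStar a b).edgeSet : Type _) ≃ Fin m =>
      ∀ i : Fin a, τ (cS a b) ≤ τ (uS a b i))
    (fun τ : ((doubleStar a b).edgeSet : Type _) ≃ Fin m =>
      ∀ j : Fin b, τ (cS a b) ≤ τ (wS a b j))
  have hmain := arith_helper a b _ _ _ _ _ hNAeq hNBeq hNCeq hIE
  rw [hsc]
  have hcoef : (a+1) ^ 2 + (b+1) ^ 2 + (a+1) * (b+1) - (a+1) - (b+1)
      = a*a + b*b + a*b + 2*a + 2*b + 1 := by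
    have e1 : (a+1) ^ 2 + (b+1) ^ 2 + (a+1) * (b+1)
        = (a*a + b*b + a*b + 2*a + 2*b + 1) + (a+1) + (b+1) := by ring
    omega
  have harg : a + 1 + (b + 1) - 2 = a + b := by omega
  rw [hcoef, harg]
  exact hmain
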